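/- Let α, β ∈ ℂ and r ∈ ℝ, and consider the scalar quadratic polynomial p(ζ) = α + rζ − conj(α)ζ² (i.e., satisfying the reality condition with k = 1). If p is not identically zero, then there exist complex numbers A, B such that p(ζ) = (A − conj(B)ζ)(B + conj(A)ζ), i.e., AB = α, |A|² − |B|² = r, and conj(A)conj(B) = conj(α). -/
import Mathlib


open Complex

theorem scalar_quadratic_factorisation (α : ℂ) (r : ℝ)
    (hne : ¬(α = 0 ∧ r = 0)) :
    ∃ A B : ℂ,
      A * B = α ∧
      Complex.normSq A - Complex.normSq B = r ∧
      starRingEnd ℂ A * starRingEnd ℂ B = starRingEnd ℂ α := by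
  by_cases hα : α = 0
  · subst hα
    have hr : r ≠ 0 := fun h => hne ⟨rfl, h⟩
    rcases le_or_gt 0 r with h | h
    · refine ⟨(Real.sqrt r : ℂ), 0, by ring, ?_, by simp⟩
      simp [Complex.normSq_ofReal, Real.sq_sqrt h, Real.mul_self_sqrt h]
    · refine ⟨0, (Real.sqrt (-r) : ℂ), by ring, ?_, by simp⟩
      have : (0:ℝ) ≤ -r := by linarith
      simp [Complex.normSq_ofReal, Real.mul_self_sqrt this]
  · set m := Complex.normSq α with hm
    have hm0 : 0 < m := Complex.normSq_pos.mpr hα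
    set s := Real.sqrt (r ^ 2 + 4 * m) with hs
    have hs2 : s ^ 2 = r ^ 2 + 4 * m := Real.sq_sqrt (by positivity)
    have hsr : |r| < s := by
      have h1 : |r| ^ 2 < s ^ 2 := by rw [_root_.sq_abs, hs2]; linarith
      have h2 : 0 ≤ s := Real.sqrt_nonneg _
      nlinarith [abs_nonneg r]
    set x := (r + s) / 2 with hx
    have hx0 : 0 < x := by
      have := neg_abs_le r
      simp only [hx]; linarith
    have hxeq : x ^ 2 = r * x + m := by
      have : x ^ 2 = (r ^ 2 + 2 * r * s + s ^ 2) / 4 := by rw [hx]; ring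
      rw [this, hs2, hx]; ring
    set A : ℂ := (Real.sqrt x : ℂ) with hA
    have hA0 : A ≠ 0 := by
      simp only [hA, ne_eq, Complex.ofReal_eq_zero]
      exact fun h => absurd (Real.sqrt_eq_zero hx0.le |>.mp h) hx0.ne'
    refine ⟨A, α / A, by field_simp, ?_, ?_⟩
    · have hnA : Complex.normSq A = x := by
        simp [hA, Complex.normSq_ofReal, Real.mul_self_sqrt hx0.le]
      have hnB : Complex.normSq (α / A) = m / x := by
        rw [Complex.normSq_div, hnA, hm]
      rw [hnA, hnB]
      field_simp
      nlinarith [hxeq]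
    · rw [← map_mul]
      congr 1
      field_simp
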